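/- Let z : Fin L → ℝ be non-constant, S ∈ Fin L, and suppose (1/L)∑_l z_l < z_S < max_l z_l (overconfidence regime at this location). Then the unique α* > 0 minimizing the NLL G(α) = −log softmax(α·z)_S over α ≥ 0 coincides with the unique maximizer of the entropy E(α) = −∑_l softmax(α·z)_l log softmax(α·z)_l over the feasible set {α ≥ 0 : ∑_l z_l · softmax(α·z)_l ≥ z_S}. Moreover at α* the constraint is active: ∑_l z_l · softmax(α*·z)_l = z_S. -/

import Mathlib

open Real Finset Filter

noncomputable def softmax {L : ℕ} (v : Fin L → ℝ) (l : Fin L) : ℝ :=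
  Real.exp (v l) / ∑ j, Real.exp (v j)

noncomputable def entropy {L : ℕ} (q : Fin L → ℝ) : ℝ :=
  -∑ l, q l * Real.log (q l)

noncomputable def Zf {L : ℕ} (z : Fin L → ℝ) (α : ℝ) : ℝ := ∑ j, Real.exp (α * z j)
noncomputable def Nf {L : ℕ} (z : Fin L → ℝ) (α : ℝ) : ℝ := ∑ j, z j * Real.exp (α * z j)
noncomputable def Mf {L : ℕ} (z : Fin L → ℝ) (α : ℝ) : ℝ := ∑ j, (z j)^2 * Real.exp (α * z j)
noncomputable def ff {L : ℕ} (z : Fin L → ℝ) (α : ℝ) : ℝ := Nf z α / Zf z α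

set_option linter.unusedSectionVars false
set_option linter.unusedVariables false

section aux
variable {L : ℕ} (z : Fin L → ℝ) [Nonempty (Fin L)]

lemma Zf_pos (α : ℝ) : 0 < Zf z α :=
  Finset.sum_pos (fun j _ => Real.exp_pos _) univ_nonempty

lemma hasDerivAt_Zf (α : ℝ) : HasDerivAt (Zf z) (Nf z α) α := by
  have : ∀ j : Fin L, HasDerivAt (fun a : ℝ => Real.exp (a * z j)) (z j * Real.exp (α * z j)) α := by
    intro j
    have h1 : HasDerivAt (fun a : ℝ => a * z j) (z j) α := hasDerivAt_mul_const _
    simpa [mul_comm, Function.comp_def] using (Real.hasDerivAt_exp (α * z j)).comp α h1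
  exact HasDerivAt.fun_sum (u := univ) (fun j _ => this j)

lemma hasDerivAt_Nf (α : ℝ) : HasDerivAt (Nf z) (Mf z α) α := by
  have : ∀ j : Fin L, HasDerivAt (fun a : ℝ => z j * Real.exp (a * z j)) ((z j)^2 * Real.exp (α * z j)) α := by
    intro j
    have h1 : HasDerivAt (fun a : ℝ => a * z j) (z j) α := hasDerivAt_mul_const _
    have := ((Real.hasDerivAt_exp (α * z j)).comp α h1).const_mul (z j)
    simpa [sq, mul_comm, mul_assoc, mul_left_comm] using this
  exact HasDerivAt.fun_sum (u := univ) (fun j _ => this j)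

lemma hasDerivAt_ff (α : ℝ) :
    HasDerivAt (ff z) ((Mf z α * Zf z α - Nf z α ^ 2) / (Zf z α) ^ 2) α := by
  have := (hasDerivAt_Nf z α).div (hasDerivAt_Zf z α) (Zf_pos z α).ne'
  exact this.congr_deriv (by ring)

lemma lagrange (e : Fin L → ℝ) :
    (∑ j, (z j)^2 * e j) * (∑ j, e j) - (∑ j, z j * e j)^2
      = (1/2) * ∑ j, ∑ k, (z j - z k)^2 * (e j * e k) := by
  have h1 : ∀ j k : Fin L, (z j - z k)^2 * (e j * e k)
      = (z j)^2 * e j * e k + (z k)^2 * e k * e j - 2 * ((z j * e j) * (z k * e k)) := by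
    intro j k; ring
  simp only [h1, Finset.sum_sub_distrib, Finset.sum_add_distrib, ← Finset.mul_sum,
    ← Finset.sum_mul]
  ring

lemma var_pos (hz : ∃ j k : Fin L, z j ≠ z k) (α : ℝ) :
    0 < Mf z α * Zf z α - Nf z α ^ 2 := by
  obtain ⟨j0, k0, hjk⟩ := hz
  rw [show Mf z α * Zf z α - Nf z α ^ 2
      = (∑ j, (z j)^2 * Real.exp (α * z j)) * (∑ j, Real.exp (α * z j))
        - (∑ j, z j * Real.exp (α * z j))^2 from rfl, lagrange]
  have hterm : ∀ j k : Fin L, 0 ≤ (z j - z k)^2 * (Real.exp (α * z j) * Real.exp (α * z k)) :=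
    fun j k => mul_nonneg (sq_nonneg _) (by positivity)
  have hpos : 0 < (z j0 - z k0)^2 * (Real.exp (α * z j0) * Real.exp (α * z k0)) := by
    have h := sub_ne_zero.mpr hjk
    positivity
  have : 0 < ∑ j, ∑ k, (z j - z k)^2 * (Real.exp (α * z j) * Real.exp (α * z k)) := by
    apply Finset.sum_pos' (fun j _ => Finset.sum_nonneg (fun k _ => hterm j k))
    exact ⟨j0, Finset.mem_univ _,
      Finset.sum_pos' (fun k _ => hterm j0 k) ⟨k0, Finset.mem_univ _, hpos⟩⟩
  linarith

lemma ff_strictMono (hz : ∃ j k : Fin L, z j ≠ z k) : StrictMono (ff z) :=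
  strictMono_of_hasDerivAt_pos (f' := fun α => (Mf z α * Zf z α - Nf z α ^ 2) / (Zf z α) ^ 2)
    (fun α => hasDerivAt_ff z α)
    (fun α => div_pos (var_pos z hz α) (pow_pos (Zf_pos z α) 2))

lemma f_eq (α : ℝ) : ∑ l, z l * softmax (fun j => α * z j) l = ff z α := by
  simp only [softmax, ff, Nf, Zf, Finset.sum_div, mul_div_assoc]

lemma G_eq (S : Fin L) (α : ℝ) :
    -Real.log (softmax (fun l => α * z l) S) = Real.log (Zf z α) - α * z S := by
  rw [softmax, show (∑ j, Real.exp (α * z j)) = Zf z α from rfl,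
    Real.log_div (Real.exp_ne_zero _) (Zf_pos z α).ne', Real.log_exp]
  ring

lemma entropy_eq (α : ℝ) :
    entropy (softmax (fun j => α * z j)) = Real.log (Zf z α) - α * ff z α := by
  have hZ := (Zf_pos z α).ne'
  unfold entropy softmax
  have h1 : ∀ l : Fin L, Real.exp (α * z l) / (∑ j, Real.exp (α * z j)) *
      Real.log (Real.exp (α * z l) / (∑ j, Real.exp (α * z j)))
      = α * ((z l * Real.exp (α * z l)) / Zf z α)
        - Real.exp (α * z l) / Zf z α * Real.log (Zf z α) := by
    intro l
    rw [show (∑ j, Real.exp (α * z j)) = Zf z α from rfl,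
      Real.log_div (Real.exp_ne_zero _) hZ, Real.log_exp]
    ring
  simp only [h1]
  rw [Finset.sum_sub_distrib, ← Finset.mul_sum, ← Finset.sum_div, ← Finset.sum_mul,
    ← Finset.sum_div]
  rw [show (∑ l, Real.exp (α * z l)) = Zf z α from rfl, div_self hZ]
  show -(α * ff z α - 1 * Real.log (Zf z α)) = _
  ring

lemma ff_zero (hL : 0 < L) : ff z 0 = (1 / (L : ℝ)) * ∑ l, z l := by
  simp only [ff, Nf, Zf, zero_mul, Real.exp_zero, mul_one, Finset.sum_const,
    Finset.card_univ, Fintype.card_fin, nsmul_eq_mul]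
  rw [div_eq_mul_inv, mul_comm, one_div]

lemma exists_big {m : ℝ} {S j0 : Fin L}
    (hj0 : z j0 = m) (hle : ∀ j, z j ≤ m) (hm : z S < m) : ∃ b : ℝ, z S < ff z b := by
  set h : ℝ → ℝ := fun α => ∑ j, (m - z j) * Real.exp (α * (z j - m)) with hh
  have hten : Tendsto h atTop (nhds 0) := by
    have hj : ∀ j : Fin L, Tendsto (fun α : ℝ => (m - z j) * Real.exp (α * (z j - m)))
        atTop (nhds 0) := by
      intro j
      rcases eq_or_lt_of_le (hle j) with he | hlt
      · simp [he]
      · have h1 : Tendsto (fun α : ℝ => α * (z j - m)) atTop atBot :=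
          tendsto_id.atTop_mul_const_of_neg (by linarith)
        have h2 := Real.tendsto_exp_atBot.comp h1
        simpa using h2.const_mul (m - z j)
    have := tendsto_finset_sum Finset.univ (fun j _ => hj j)
    simpa using this
  have hev : ∀ᶠ b in atTop, h b < m - z S := hten.eventually (gt_mem_nhds (by linarith))
  obtain ⟨b, hb⟩ := hev.exists
  refine ⟨b, ?_⟩
  have hZ := Zf_pos z b
  have hnum : (0:ℝ) ≤ ∑ j, (m - z j) * Real.exp (b * z j) :=
    Finset.sum_nonneg fun j _ => mul_nonneg (by linarith [hle j]) (Real.exp_pos _).le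
  have hZm : Real.exp (b * m) ≤ Zf z b := by
    have := Finset.single_le_sum (f := fun j => Real.exp (b * z j))
      (fun i _ => (Real.exp_pos _).le) (Finset.mem_univ j0)
    simpa only [Zf, hj0] using this
  have key : m - ff z b ≤ h b := by
    have h1 : m - ff z b = (∑ j, (m - z j) * Real.exp (b * z j)) / Zf z b := by
      rw [ff, eq_div_iff hZ.ne']
      simp only [sub_mul, Finset.sum_sub_distrib]
      rw [div_mul_cancel₀ _ hZ.ne']
      simp [Zf, Finset.mul_sum]
      rfl
    have h2 : (∑ j, (m - z j) * Real.exp (b * z j)) / Zf z b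
        ≤ (∑ j, (m - z j) * Real.exp (b * z j)) / Real.exp (b * m) :=
      div_le_div_of_nonneg_left hnum (Real.exp_pos _) hZm
    have h3 : (∑ j, (m - z j) * Real.exp (b * z j)) / Real.exp (b * m) = h b := by
      rw [hh, Finset.sum_div]
      refine Finset.sum_congr rfl fun j _ => ?_
      rw [mul_div_assoc, ← Real.exp_sub, mul_sub]
    rw [h1]
    calc _ ≤ _ := h2
    _ = h b := h3
  linarith

lemma hasDerivAt_G (S : Fin L) (α : ℝ) :
    HasDerivAt (fun a => Real.log (Zf z a) - a * z S) (ff z α - z S) α :=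
  ((hasDerivAt_Zf z α).log (Zf_pos z α).ne').sub (hasDerivAt_mul_const (z S))

lemma hasDerivAt_E (α : ℝ) :
    HasDerivAt (fun a => Real.log (Zf z a) - a * ff z a)
      (-(α * ((Mf z α * Zf z α - Nf z α ^ 2) / (Zf z α) ^ 2))) α := by
  have h1 := (hasDerivAt_Zf z α).log (Zf_pos z α).ne'
  have h2 := (hasDerivAt_id α).mul (hasDerivAt_ff z α)
  have h3 := h1.sub h2
  refine h3.congr_deriv ?_
  show Nf z α / Zf z α - (1 * ff z α + α * _) = _
  rw [show ff z α = Nf z α / Zf z α from rfl]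
  ring

end aux

theorem nll_min_iff_constrained_entropy_max {L : ℕ} (hL : 0 < L) (z : Fin L → ℝ)
    (S : Fin L) (hz : ¬ ∃ k, ∀ l, z l = k)
    (h1 : (1 / (L : ℝ)) * ∑ l, z l < z S)
    (h2 : z S < Finset.univ.sup' ⟨⟨0, hL⟩, Finset.mem_univ _⟩ z) :
    ∃! αs : ℝ, 0 < αs ∧
      (∀ α : ℝ, 0 ≤ α →
        -Real.log (softmax (fun l => αs * z l) S) ≤
          -Real.log (softmax (fun l => α * z l) S)) ∧
      (∀ α : ℝ, 0 ≤ α → z S ≤ (∑ l, z l * softmax (fun j => α * z j) l) →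
        entropy (softmax (fun j => α * z j)) ≤ entropy (softmax (fun j => αs * z j))) ∧
      (∑ l, z l * softmax (fun j => αs * z j) l) = z S := by
  haveI : Nonempty (Fin L) := ⟨⟨0, hL⟩⟩
  have hz' : ∃ j k : Fin L, z j ≠ z k := by
    push_neg at hz
    obtain ⟨l, hl⟩ := hz (z ⟨0, hL⟩)
    exact ⟨l, ⟨0, hL⟩, hl⟩
  have hsm := ff_strictMono z hz'
  obtain ⟨j0, -, hj0⟩ := Finset.exists_mem_eq_sup'
    (⟨⟨0, hL⟩, Finset.mem_univ _⟩ : Finset.univ.Nonempty) z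
  have hle : ∀ j, z j ≤ Finset.univ.sup' ⟨⟨0, hL⟩, Finset.mem_univ _⟩ z :=
    fun j => Finset.le_sup' z (Finset.mem_univ j)
  obtain ⟨b, hbS⟩ := exists_big z hj0.symm hle h2
  have hf0 : ff z 0 < z S := by rw [ff_zero z hL]; exact h1
  have hb0 : (0:ℝ) < b := by
    by_contra hb
    push_neg at hb
    have := hsm.monotone hb
    linarith
  have hcont : Continuous (ff z) := by
    have : Differentiable ℝ (ff z) := fun x => (hasDerivAt_ff z x).differentiableAt
    exact this.continuous
  obtain ⟨αs, hmem, hfeq⟩ : ∃ αs ∈ Set.Icc (0:ℝ) b, ff z αs = z S := by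
    have := intermediate_value_Icc hb0.le hcont.continuousOn
    have hzmem : z S ∈ Set.Icc (ff z 0) (ff z b) := ⟨hf0.le, hbS.le⟩
    exact this hzmem
  have hαs : 0 < αs := by
    rcases eq_or_lt_of_le hmem.1 with he | hlt
    · exfalso; rw [← he] at hfeq; linarith
    · exact hlt
  -- G minimization
  have hGmin : ∀ α : ℝ, 0 ≤ α →
      Real.log (Zf z αs) - αs * z S ≤ Real.log (Zf z α) - α * z S := by
    intro α hα
    have hGc : Continuous (fun a => Real.log (Zf z a) - a * z S) := by
      have : Differentiable ℝ (fun a => Real.log (Zf z a) - a * z S) :=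
        fun x => (hasDerivAt_G z S x).differentiableAt
      exact this.continuous
    rcases le_total α αs with hle' | hle'
    · have hanti : AntitoneOn (fun a => Real.log (Zf z a) - a * z S) (Set.Icc 0 αs) := by
        apply antitoneOn_of_hasDerivWithinAt_nonpos (convex_Icc 0 αs) hGc.continuousOn
          (f' := fun x => ff z x - z S)
          (fun x hx => (hasDerivAt_G z S x).hasDerivWithinAt)
        intro x hx
        rw [interior_Icc] at hx
        have := hsm hx.2
        rw [hfeq] at this
        linarith
      exact hanti ⟨hα, hle'⟩ ⟨hαs.le, le_refl _⟩ hle'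
    · have hmono : MonotoneOn (fun a => Real.log (Zf z a) - a * z S) (Set.Ici αs) := by
        apply monotoneOn_of_hasDerivWithinAt_nonneg (convex_Ici αs) hGc.continuousOn
          (f' := fun x => ff z x - z S)
          (fun x hx => (hasDerivAt_G z S x).hasDerivWithinAt)
        intro x hx
        rw [interior_Ici] at hx
        have := hsm hx
        rw [hfeq] at this
        linarith
      exact hmono (Set.self_mem_Ici) hle' hle'
  -- E antitone
  have hEanti : AntitoneOn (fun a => Real.log (Zf z a) - a * ff z a) (Set.Ici 0) := by
    have hEc : Continuous (fun a => Real.log (Zf z a) - a * ff z a) := by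
      have : Differentiable ℝ (fun a => Real.log (Zf z a) - a * ff z a) :=
        fun x => (hasDerivAt_E z x).differentiableAt
      exact this.continuous
    apply antitoneOn_of_hasDerivWithinAt_nonpos (convex_Ici 0) hEc.continuousOn
      (f' := fun x => -(x * ((Mf z x * Zf z x - Nf z x ^ 2) / (Zf z x) ^ 2)))
      (fun x hx => (hasDerivAt_E z x).hasDerivWithinAt)
    intro x hx
    rw [interior_Ici] at hx
    have hv := div_pos (var_pos z hz' x) (pow_pos (Zf_pos z x) 2)
    have : 0 < x * ((Mf z x * Zf z x - Nf z x ^ 2) / (Zf z x) ^ 2) := mul_pos hx hv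
    linarith
  refine ⟨αs, ⟨hαs, ?_, ?_, ?_⟩, ?_⟩
  · intro α hα
    rw [G_eq z S αs, G_eq z S α]
    exact hGmin α hα
  · intro α hα hcon
    rw [f_eq z α] at hcon
    have hαsα : αs ≤ α := by
      by_contra hlt
      push_neg at hlt
      have := hsm hlt
      rw [hfeq] at this
      linarith
    rw [entropy_eq z α, entropy_eq z αs]
    exact hEanti (Set.mem_Ici.mpr hαs.le) (Set.mem_Ici.mpr (le_trans hαs.le hαsα)) hαsα
  · rw [f_eq z αs]; exact hfeq
  · rintro y ⟨hy0, -, -, hyact⟩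
    rw [f_eq z y] at hyact
    exact hsm.injective (by rw [hyact, hfeq])
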